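/- Let S* ⊆ (0, ∞) be open and additive, S = [0, ∞) \ S*, L = sup S. With a(x) = sup{ y ∈ ∂S : y ≤ x }, b(x) = inf{ y ∈ ∂S : y ≥ x }, α(x) = x − a(x), β(x) = b(x) − x: if s* ∈ S* and both x and s* + x lie in the interior of S, then α(s* + x) < α(x) and β(s* + x) < β(x). -/
import Mathlib

/-- Crossing lemma: going up from a point outside a closed set to a point inside,
we meet the frontier, strictly above the outside point. -/
lemma cross_up (S : Set ℝ) (hScl : IsClosed S) (u v : ℝ) (hu : u ∉ S) (hv : v ∈ S)
    (huv : u ≤ v) : ∃ w, w ∈ frontier S ∧ u < w ∧ w ≤ v := by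
  set K := S ∩ Set.Icc u v with hK
  have hKne : K.Nonempty := ⟨v, hv, huv, le_refl v⟩
  have hKbdd : BddBelow K := ⟨u, fun t ht => ht.2.1⟩
  have hKcl : IsClosed K := hScl.inter isClosed_Icc
  have hwK : sInf K ∈ K := hKcl.csInf_mem hKne hKbdd
  set w := sInf K
  have hwu : u ≤ w := hwK.2.1
  have hwu' : u < w := lt_of_le_of_ne hwu (by intro h; rw [h] at hu; exact hu hwK.1)
  refine ⟨w, ?_, hwu', hwK.2.2⟩
  rw [hScl.frontier_eq]
  refine ⟨hwK.1, ?_⟩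
  -- w not in interior S : points in (u, w) are outside S
  intro hmem
  rcases Metric.isOpen_iff.1 isOpen_interior w hmem with ⟨ε, hε, hball⟩
  set t := max u (w - ε / 2) with ht
  have htw : t < w := max_lt hwu' (by linarith)
  have htS : t ∈ S := by
    have : t ∈ Metric.ball w ε := by
      simp only [Metric.mem_ball, Real.dist_eq, abs_lt]
      constructor <;> [skip; linarith]
      have : w - ε / 2 ≤ t := le_max_right _ _
      linarith
    exact interior_subset (hball this)
  have : w ≤ t := csInf_le hKbdd ⟨htS, le_max_left _ _, le_trans htw.le hwK.2.2⟩
  exact absurd this (not_le.2 htw)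

/-- Crossing lemma: going up from a point inside a closed set to a point outside,
we meet the frontier strictly below the outside point. -/
lemma cross_down (S : Set ℝ) (hScl : IsClosed S) (u v : ℝ) (hu : u ∈ S) (hv : v ∉ S)
    (huv : u ≤ v) : ∃ w, w ∈ frontier S ∧ u ≤ w ∧ w < v := by
  set K := S ∩ Set.Icc u v with hK
  have hKne : K.Nonempty := ⟨u, hu, le_refl u, huv⟩
  have hKbdd : BddAbove K := ⟨v, fun t ht => ht.2.2⟩
  have hKcl : IsClosed K := hScl.inter isClosed_Icc
  have hwK : sSup K ∈ K := hKcl.csSup_mem hKne hKbdd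
  set w := sSup K
  have hwv : w ≤ v := hwK.2.2
  have hwv' : w < v := lt_of_le_of_ne hwv (by intro h; rw [← h] at hv; exact hv hwK.1)
  refine ⟨w, ?_, hwK.2.1, hwv'⟩
  rw [hScl.frontier_eq]
  refine ⟨hwK.1, ?_⟩
  intro hmem
  rcases Metric.isOpen_iff.1 isOpen_interior w hmem with ⟨ε, hε, hball⟩
  set t := min v (w + ε / 2) with ht
  have htw : w < t := lt_min hwv' (by linarith)
  have htS : t ∈ S := by
    have : t ∈ Metric.ball w ε := by
      simp only [Metric.mem_ball, Real.dist_eq, abs_lt]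
      constructor
      · linarith
      · have : t ≤ w + ε / 2 := min_le_right _ _
        linarith
    exact interior_subset (hball this)
  have : t ≤ w := le_csSup hKbdd ⟨htS, le_trans hwK.2.1 htw.le, min_le_left _ _⟩
  exact absurd this (not_le.2 htw)

theorem alpha_beta_decrease (Sstar : Set ℝ) (hsub : Sstar ⊆ Set.Ioi 0)
    (hopen : IsOpen Sstar) (hadd : ∀ p ∈ Sstar, ∀ q ∈ Sstar, p + q ∈ Sstar)
    (S : Set ℝ) (hS : S = Set.Ici (0 : ℝ) \ Sstar)
    (a b : ℝ → ℝ)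
    (ha : ∀ x, a x = sSup {y | y ∈ frontier S ∧ y ≤ x})
    (hb : ∀ x, b x = sInf {y | y ∈ frontier S ∧ x ≤ y})
    (sstar : ℝ) (hsstar : sstar ∈ Sstar) (x : ℝ)
    (hx : x ∈ interior S) (hx' : sstar + x ∈ interior S) :
    (sstar + x) - a (sstar + x) < x - a x ∧ b (sstar + x) - (sstar + x) < b x - x := by
  have hScl : IsClosed S := by rw [hS]; exact isClosed_Ici.sdiff hopen
  have hSSstar : ∀ y ∈ S, y ∉ Sstar := by intro y hy; rw [hS] at hy; exact hy.2
  have hSge : ∀ y ∈ S, (0:ℝ) ≤ y := by intro y hy; rw [hS] at hy; exact hy.1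
  have hsstar0 : (0:ℝ) < sstar := hsub hsstar
  have hxS : x ∈ S := interior_subset hx
  have hx'S : sstar + x ∈ S := interior_subset hx'
  have hx0 : (0:ℝ) ≤ x := hSge x hxS
  -- 0 is a frontier point of S
  have h0S : (0:ℝ) ∈ S := by
    rw [hS]; exact ⟨Set.self_mem_Ici, fun h => absurd (hsub h) (by simp)⟩
  have h0f : (0:ℝ) ∈ frontier S := by
    rw [hScl.frontier_eq]
    refine ⟨h0S, fun hmem => ?_⟩
    rcases Metric.isOpen_iff.1 isOpen_interior 0 hmem with ⟨ε, hε, hball⟩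
    have : (-(ε/2)) ∈ S := interior_subset (hball (by
      simp only [Metric.mem_ball, Real.dist_eq]
      rw [sub_zero, abs_neg, abs_of_pos (by linarith)]; linarith))
    have := hSge _ this; linarith
  -- Sstar is disjoint from frontier S
  have hfront_not_star : ∀ y ∈ frontier S, y ∉ Sstar := by
    intro y hy hmem
    have : y ∈ closure S := frontier_subset_closure hy
    rw [hScl.closure_eq] at this
    exact hSSstar y this hmem
  have hfrontS : frontier S ⊆ S := by rw [hScl.frontier_eq]; exact Set.diff_subset
  -- key lemma: sstar + frontier point ∈ Sstar
  have hkey : ∀ y ∈ frontier S, sstar + y ∈ Sstar := by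
    intro y hy
    have hyS : y ∈ S := hfrontS hy
    have hy0 : (0:ℝ) ≤ y := hSge y hyS
    rcases eq_or_lt_of_le hy0 with h0 | h0
    · rw [← h0, add_zero]; exact hsstar
    · -- y > 0 : y ∈ closure Sstar
      have hyc : y ∈ closure Sᶜ := by
        rw [frontier_eq_closure_inter_closure] at hy; exact hy.2
      have hcompl : Sᶜ = Set.Iio 0 ∪ Sstar := by
        rw [hS]; ext z
        simp only [Set.mem_compl_iff, Set.mem_diff, Set.mem_Ici, Set.mem_union, Set.mem_Iio,
          not_and, not_not]
        constructor
        · intro h; by_cases hz : 0 ≤ z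
          · exact Or.inr (h hz)
          · exact Or.inl (not_le.1 hz)
        · rintro (h | h)
          · intro h'; linarith
          · intro _; exact h
      rw [hcompl, closure_union] at hyc
      have hycS : y ∈ closure Sstar := by
        rcases hyc with h | h
        · rw [closure_Iio] at h; simp only [Set.mem_Iic] at h; linarith
        · exact h
      rcases Metric.isOpen_iff.1 hopen sstar hsstar with ⟨ε, hε, hball⟩
      rcases Metric.mem_closure_iff.1 hycS ε hε with ⟨q, hqS, hq⟩
      have h1 : sstar + (y - q) ∈ Sstar := by
        apply hball
        simp only [Metric.mem_ball, Real.dist_eq]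
        rw [Real.dist_eq] at hq
        have : sstar + (y - q) - sstar = y - q := by ring
        rw [this]; exact hq
      have := hadd _ h1 _ hqS
      have he : sstar + (y - q) + q = sstar + y := by ring
      rwa [he] at this
  -- a x is a frontier point ≤ x
  have hAx : ∀ z : ℝ, z ∈ S → a z ∈ frontier S ∧ a z ≤ z := by
    intro z hz
    have hz0 : (0:ℝ) ≤ z := hSge z hz
    have hne : {y | y ∈ frontier S ∧ y ≤ z}.Nonempty := ⟨0, h0f, hz0⟩
    have hbdd : BddAbove {y | y ∈ frontier S ∧ y ≤ z} := ⟨z, fun t ht => ht.2⟩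
    have hcl : IsClosed {y | y ∈ frontier S ∧ y ≤ z} := by
      have : {y | y ∈ frontier S ∧ y ≤ z} = frontier S ∩ Set.Iic z := rfl
      rw [this]; exact isClosed_frontier.inter isClosed_Iic
    have := hcl.csSup_mem hne hbdd
    rw [ha z]
    exact ⟨this.1, this.2⟩
  have hmul : ∀ n : ℕ, ((n:ℝ)+1) * sstar ∈ Sstar := by
    intro n
    induction n with
    | zero => simpa using hsstar
    | succ k ih =>
      have h2 := hadd _ ih _ hsstar
      have he : (((k:ℕ):ℝ)+1) * sstar + sstar = (((k+1:ℕ):ℝ))*sstar + sstar := by push_cast; ring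
      have he2 : (((k+1:ℕ):ℝ)+1) * sstar = (((k:ℕ):ℝ)+1) * sstar + sstar := by push_cast; ring
      rwa [he2]
  have hlarge : ∀ z : ℝ, ∃ N, z < N ∧ N ∉ S := by
    intro z
    obtain ⟨n, hn⟩ := exists_nat_gt (z / sstar)
    have hns : z < ((n:ℝ)+1) * sstar := by
      rw [div_lt_iff₀ hsstar0] at hn
      nlinarith
    exact ⟨((n:ℝ)+1) * sstar, hns, fun h => hSSstar _ h (hmul n)⟩
  -- b z is a frontier point ≥ z for z ∈ S
  have hBx : ∀ z : ℝ, z ∈ S → b z ∈ frontier S ∧ z ≤ b z := by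
    intro z hz
    obtain ⟨N, hzN, hNS⟩ := hlarge z
    obtain ⟨w, hwf, hzw, hwN⟩ := cross_down S hScl z N hz hNS hzN.le
    have hne : {y | y ∈ frontier S ∧ z ≤ y}.Nonempty := ⟨w, hwf, hzw⟩
    have hbdd : BddBelow {y | y ∈ frontier S ∧ z ≤ y} := ⟨z, fun t ht => ht.2⟩
    have hcl : IsClosed {y | y ∈ frontier S ∧ z ≤ y} := by
      have : {y | y ∈ frontier S ∧ z ≤ y} = frontier S ∩ Set.Ici z := rfl
      rw [this]; exact isClosed_frontier.inter isClosed_Ici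
    have := hcl.csInf_mem hne hbdd
    rw [hb z]
    exact ⟨this.1, this.2⟩
  obtain ⟨hax_f, hax_le⟩ := hAx x hxS
  obtain ⟨hbx_f, hbx_ge⟩ := hBx x hxS
  constructor
  · -- alpha part
    have h1 : sstar + a x ∈ Sstar := hkey _ hax_f
    have h2 : sstar + a x ∉ S := fun h => hSSstar _ h h1
    obtain ⟨w, hwf, hw1, hw2⟩ := cross_up S hScl (sstar + a x) (sstar + x) h2 hx'S
      (by linarith)
    have hle : w ≤ a (sstar + x) := by
      rw [ha (sstar + x)]
      exact le_csSup ⟨sstar + x, fun t ht => ht.2⟩ ⟨hwf, hw2⟩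
    linarith
  · -- beta part
    have h1 : sstar + b x ∈ Sstar := hkey _ hbx_f
    have h2 : sstar + b x ∉ S := fun h => hSSstar _ h h1
    obtain ⟨w, hwf, hw1, hw2⟩ := cross_down S hScl (sstar + x) (sstar + b x) hx'S h2
      (by linarith)
    have hle : b (sstar + x) ≤ w := by
      rw [hb (sstar + x)]
      exact csInf_le ⟨sstar + x, fun t ht => ht.2⟩ ⟨hwf, hw1⟩
    linarith
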